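/- Let W be a Coxeter group with Demazure product *. For all v, w ∈ W, w ≤_L v*w and v ≤_R v*w, where ≤_L and ≤_R denote the left and right weak Bruhat orders. -/

import Mathlib

/-- The right weak Bruhat order: `u ≤_R v` iff `ℓ(u) + ℓ(u⁻¹v) = ℓ(v)`. -/
def rWeak {B W : Type*} [Group W] {M : CoxeterMatrix B} (cs : CoxeterSystem M W)
    (u v : W) : Prop :=
  cs.length u + cs.length (u⁻¹ * v) = cs.length v

/-- The left weak Bruhat order: `u ≤_L v` iff `ℓ(vu⁻¹) + ℓ(u) = ℓ(v)`. -/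
def lWeak {B W : Type*} [Group W] {M : CoxeterMatrix B} (cs : CoxeterSystem M W)
    (u v : W) : Prop :=
  cs.length (v * u⁻¹) + cs.length u = cs.length v

/-- `dem` is the Demazure (Hecke) product on the Coxeter group: it satisfies
`1 * u = u`, `s * u = max{u, su}` for simple reflections `s`, and is associative. -/
def IsDemazureProduct {B W : Type*} [Group W] {M : CoxeterMatrix B}
    (cs : CoxeterSystem M W) (dem : W → W → W) : Prop :=
  (∀ u : W, dem 1 u = u) ∧
  (∀ (i : B) (u : W),
    dem (cs.simple i) u =
      if cs.length u < cs.length (cs.simple i * u) then cs.simple i * u else u) ∧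
  (∀ u v x : W, dem (dem u v) x = dem u (dem v x))

set_option linter.unusedSectionVars false

open List
namespace DemAux
variable {B W : Type*} [Group W] {M : CoxeterMatrix B} (cs : CoxeterSystem M W)
local prefix:100 "ℓ" => cs.length
local prefix:100 "σ" => cs.simple
local prefix:100 "π" => cs.wordProd
local prefix:100 "ris" => cs.rightInvSeq

variable [DecidableEq W]

def etaFun (i : B) : W × ℤˣ → W × ℤˣ :=
  fun x => (σ i * x.1 * σ i, if x.1 = σ i then -x.2 else x.2)

lemma etaFun_involutive (i : B) : Function.Involutive (etaFun cs i) := by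
  rintro ⟨w, ε⟩
  simp only [etaFun]
  have h1 : σ i * (σ i * w * σ i) * σ i = w := by
    simp [mul_assoc, cs.simple_mul_simple_cancel_left]
  have h2 : (σ i * w * σ i = σ i) ↔ (w = σ i) := by
    constructor
    · intro h
      have := congrArg (fun z => σ i * z * σ i) h
      simpa [mul_assoc, h1] using this
    · rintro rfl; simp [mul_assoc, cs.simple_mul_simple_self]
  by_cases hw : w = σ i
  · simp [hw, h2, cs.simple_mul_simple_self, mul_assoc]
  · simp [hw, h2, h1]

noncomputable def eta (i : B) : Equiv.Perm (W × ℤˣ) :=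
  (etaFun_involutive cs i).toPerm _

lemma eta_apply (i : B) (x : W × ℤˣ) :
    eta cs i x = (σ i * x.1 * σ i, if x.1 = σ i then -x.2 else x.2) := rfl

lemma prod_map_eta_apply (ω : List B) (w : W) (ε : ℤˣ) :
    (List.map (eta cs) ω).prod (w, ε) =
      (π ω * w * (π ω)⁻¹, ((-1 : ℤˣ) ^ (List.count w (ris ω))) * ε) := by
  induction ω generalizing ε with
  | nil => simp
  | cons i ω ih =>
      rw [List.map_cons, List.prod_cons, Equiv.Perm.mul_apply, ih, eta_apply]
      simp only [CoxeterSystem.rightInvSeq, List.count_cons, cs.wordProd_cons]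
      have hiff : (π ω * w * (π ω)⁻¹ = σ i) ↔ ((π ω)⁻¹ * σ i * π ω = w) := by
        constructor
        · rintro h; rw [← h]; group
        · rintro rfl; group
      have hbeq : ((π ω)⁻¹ * σ i * π ω == w) = decide ((π ω)⁻¹ * σ i * π ω = w) := rfl
      refine Prod.ext ?_ ?_
      · simp [mul_assoc, cs.inv_simple, mul_inv_rev]
      · by_cases h : (π ω)⁻¹ * σ i * π ω = w
        · simp only [h, hiff.mpr h, if_true, beq_self_eq_true, if_pos, pow_succ, mul_assoc, neg_one_mul, mul_neg]
          simp
        · have h2 : ¬ (π ω * w * (π ω)⁻¹ = σ i) := fun hc => h (hiff.mp hc)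
          simp [hbeq, h, h2]

lemma prod_map_alternatingWord {N : Type*} [Monoid N] (f : B → N) (i i' : B) (m : ℕ) :
    (List.map f (CoxeterSystem.alternatingWord i i' m)).prod =
      (if Even m then 1 else f i') * (f i * f i') ^ (m / 2) := by
  induction m with
  | zero => simp [CoxeterSystem.alternatingWord]
  | succ m ih =>
      rw [CoxeterSystem.alternatingWord_succ', List.map_cons, List.prod_cons, ih]
      by_cases hm : Even m
      · have h₁ : ¬ Even (m + 1) := by simp [hm, parity_simps]
        have h₂ : (m + 1) / 2 = m / 2 := Nat.succ_div_of_not_dvd <| by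
          rwa [← even_iff_two_dvd]
        simp [hm, h₁, h₂]
      · have h₁ : Even (m + 1) := by simp [hm, parity_simps]
        have h₂ : (m + 1) / 2 = m / 2 + 1 := Nat.succ_div_of_dvd h₁.two_dvd
        simp [hm, h₁, h₂, ← pow_succ', ← mul_assoc]

lemma drop_alternatingWord (i i' : B) (k n : ℕ) :
    List.drop k (CoxeterSystem.alternatingWord i i' n) =
      CoxeterSystem.alternatingWord i i' (n - k) := by
  induction k generalizing n with
  | zero => simp
  | succ k ih =>
      cases n with
      | zero => simp [CoxeterSystem.alternatingWord]
      | succ n =>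
          rw [CoxeterSystem.alternatingWord_succ']
          rw [List.drop_succ_cons, ih n]
          congr 1
          omega

lemma getElem?_alternatingWord (i i' : B) (n j : ℕ) (hj : j < n) :
    (CoxeterSystem.alternatingWord i i' n)[j]? =
      some (if Even (n - 1 - j) then i' else i) := by
  have h1 : (CoxeterSystem.alternatingWord i i' n).drop j
      = CoxeterSystem.alternatingWord i i' (n - j) := drop_alternatingWord i i' j n
  have h2 : n - j = (n - 1 - j) + 1 := by omega
  rw [← List.head?_drop, h1, h2, CoxeterSystem.alternatingWord_succ']
  rfl

lemma conj_pow_aux {G : Type*} [Group G] (b p : G) (h : p⁻¹ * b = b * p) (n : ℕ) :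
    (p ^ n)⁻¹ * b * p ^ n = b * p ^ (2 * n) := by
  induction n with
  | zero => simp
  | succ n ih =>
      calc (p ^ (n+1))⁻¹ * b * p ^ (n+1)
          = p⁻¹ * ((p ^ n)⁻¹ * b * p ^ n) * p := by rw [pow_succ]; group
        _ = (p⁻¹ * b) * (p ^ (2 * n) * p) := by rw [ih]; group
        _ = b * p ^ (2 * (n+1)) := by rw [h]; group

lemma simple_conj_rel (i i' : B) :
    (σ i * σ i')⁻¹ * σ i' = σ i' * (σ i * σ i') := by
  rw [mul_inv_rev, cs.inv_simple, cs.inv_simple]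
  simp [mul_assoc]

lemma conj_wordProd_alternatingWord (i i' : B) (d : ℕ) :
    (π (CoxeterSystem.alternatingWord i i' d))⁻¹ * (if Even d then σ i' else σ i)
      * π (CoxeterSystem.alternatingWord i i' d)
      = σ i' * (σ i * σ i') ^ d := by
  have hpb := simple_conj_rel cs i i'
  rw [cs.prod_alternatingWord_eq_mul_pow]
  by_cases hd : Even d
  · have h2 : 2 * (d / 2) = d := by rw [Nat.even_iff] at hd; omega
    simp only [hd, if_true, one_mul]
    rw [conj_pow_aux _ _ hpb (d / 2), h2]
  · have h2 : 2 * (d / 2 + 1) = d + 1 := by rw [Nat.even_iff] at hd; omega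
    simp only [hd, if_false]
    have bab : (σ i')⁻¹ * σ i * σ i' = (σ i * σ i')⁻¹ * σ i' := by
      rw [mul_inv_rev, cs.inv_simple, cs.inv_simple]
    generalize hp : σ i * σ i' = p at hpb bab ⊢
    calc (σ i' * p ^ (d / 2))⁻¹ * σ i * (σ i' * p ^ (d / 2))
        = (p ^ (d / 2))⁻¹ * ((σ i')⁻¹ * σ i * σ i') * p ^ (d / 2) := by
          group
      _ = (p ^ (d / 2))⁻¹ * (p⁻¹ * σ i') * p ^ (d / 2) := by
          rw [bab]
      _ = ((p ^ (d / 2 + 1))⁻¹ * σ i' * p ^ (d / 2 + 1)) * p⁻¹ := by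
          rw [pow_succ]
          group
      _ = σ i' * p ^ (2 * (d / 2 + 1)) * p⁻¹ := by
          rw [conj_pow_aux _ _ hpb (d / 2 + 1)]
      _ = σ i' * p ^ d := by
          rw [h2, pow_succ]
          group

lemma getD_ris_alternatingWord (i i' : B) (n j : ℕ) (hj : j < n) :
    (ris (CoxeterSystem.alternatingWord i i' n)).getD j 1
      = σ i' * (σ i * σ i') ^ (n - 1 - j) := by
  rw [cs.getD_rightInvSeq]
  have hget : (CoxeterSystem.alternatingWord i i' n)[j]?
      = some (if Even (n - 1 - j) then i' else i) := by
    exact getElem?_alternatingWord i i' n j hj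
  rw [hget, drop_alternatingWord]
  have h1 : n - (j + 1) = n - 1 - j := by omega
  rw [h1]
  have := conj_wordProd_alternatingWord cs i i' (n - 1 - j)
  simp only [Option.map_some, Option.getD_some]
  by_cases he : Even (n - 1 - j) <;> simp only [he, if_true, if_false] <;>
    simpa [he] using this

lemma ris_alternatingWord_split (i i' : B) (m : ℕ) (hm : (σ i * σ i') ^ m = 1) :
    ris (CoxeterSystem.alternatingWord i i' (2 * m))
      = ris (CoxeterSystem.alternatingWord i i' m)
        ++ ris (CoxeterSystem.alternatingWord i i' m) := by
  apply List.ext_getElem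
  · simp [Nat.two_mul]
  · intro j h1 h2
    have hlen : j < 2 * m := by simpa using h1
    rw [← List.getD_eq_getElem _ 1, ← List.getD_eq_getElem _ 1]
    rw [getD_ris_alternatingWord cs i i' (2 * m) j hlen]
    by_cases hj : j < m
    · rw [List.getD_append _ _ 1 _ (by simpa using hj)]
      rw [getD_ris_alternatingWord cs i i' m j hj]
      have he : 2 * m - 1 - j = (m - 1 - j) + m := by omega
      rw [he, pow_add, hm, mul_one]
    · have hj' : j - m < m := by omega
      have hlen2 : (ris (CoxeterSystem.alternatingWord i i' m)).length = m := by simp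
      rw [List.getD_append_right _ _ 1 _ (by simpa using not_lt.mp hj)]
      rw [hlen2]
      rw [getD_ris_alternatingWord cs i i' m (j - m) hj']
      congr 2
      omega

lemma eta_liftable : CoxeterMatrix.IsLiftable M (eta cs) := by
  intro i i'
  have key : (eta cs i * eta cs i') ^ M i i'
      = (List.map (eta cs) (CoxeterSystem.alternatingWord i i' (2 * M i i'))).prod := by
    rw [prod_map_alternatingWord (eta cs) i i' (2 * M i i')]
    have : Even (2 * M i i') := ⟨M i i', by ring⟩
    simp [this, Nat.mul_div_cancel_left]
  rw [key]
  apply Equiv.ext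
  rintro ⟨w, ε⟩
  rw [prod_map_eta_apply]
  have hπ : π (CoxeterSystem.alternatingWord i i' (2 * M i i')) = 1 := by
    rw [cs.prod_alternatingWord_eq_mul_pow]
    have : Even (2 * M i i') := ⟨M i i', by ring⟩
    simp [this, Nat.mul_div_cancel_left, cs.simple_mul_simple_pow]
  have hcount : Even (List.count w (ris (CoxeterSystem.alternatingWord i i' (2 * M i i')))) := by
    rw [ris_alternatingWord_split cs i i' (M i i') (cs.simple_mul_simple_pow i i'),
      List.count_append]
    exact ⟨_, rfl⟩
  rw [hπ]
  simp [hcount.neg_one_pow]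

noncomputable def phi : W →* Equiv.Perm (W × ℤˣ) := cs.lift ⟨eta cs, eta_liftable cs⟩

lemma phi_simple (i : B) : phi cs (σ i) = eta cs i :=
  cs.lift_apply_simple (eta_liftable cs) i

lemma phi_wordProd (ω : List B) : phi cs (π ω) = (List.map (eta cs) ω).prod := by
  induction ω with
  | nil => simp
  | cons i ω ih => rw [cs.wordProd_cons, map_mul, phi_simple, List.map_cons, List.prod_cons, ih]

/-- The sign `η(w, t)`. -/
noncomputable def nu (w t : W) : ℤˣ := (phi cs w (t, 1)).2

lemma phi_apply (u x : W) (ε : ℤˣ) : phi cs u (x, ε) = (u * x * u⁻¹, nu cs u x * ε) := by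
  obtain ⟨ω, rfl⟩ := cs.wordProd_surjective u
  rw [phi_wordProd, prod_map_eta_apply]
  have : nu cs (π ω) x = (-1 : ℤˣ) ^ (List.count x (ris ω)) := by
    rw [nu, phi_wordProd, prod_map_eta_apply, mul_one]
  rw [this]

lemma nu_wordProd (ω : List B) (x : W) :
    nu cs (π ω) x = (-1 : ℤˣ) ^ (List.count x (ris ω)) := by
  rw [nu, phi_wordProd, prod_map_eta_apply, mul_one]

lemma mem_ris_of_nu_neg_one {ω : List B} {t : W} (h : nu cs (π ω) t = -1) : t ∈ ris ω := by
  rw [nu_wordProd] at h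
  by_contra hmem
  rw [List.count_eq_zero_of_not_mem hmem, pow_zero] at h
  exact absurd h (by decide)

lemma length_lt_of_nu_neg_one {w t : W} (h : nu cs w t = -1) : ℓ (w * t) < ℓ w := by
  obtain ⟨ω, hlen, rfl⟩ := cs.exists_reduced_word w
  have hred : cs.IsReduced ω := hlen
  exact (cs.isRightInversion_of_mem_rightInvSeq hred (mem_ris_of_nu_neg_one cs h)).2

lemma nu_self_neg_one {t : W} (ht : cs.IsReflection t) : nu cs t t = -1 := by
  obtain ⟨u, i, rfl⟩ := ht
  set t := u * σ i * u⁻¹ with hts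
  have h1 : phi cs u⁻¹ (t, 1) = (σ i, nu cs u⁻¹ t) := by
    rw [phi_apply, mul_one]
    congr 1
    rw [hts]
    group
  have h2 : phi cs (σ i) (σ i, nu cs u⁻¹ t) = (σ i, -(nu cs u⁻¹ t)) := by
    rw [phi_simple, eta_apply]
    simp [cs.simple_mul_simple_cancel_left]
  have h3 : nu cs u (σ i) * nu cs u⁻¹ t = 1 := by
    have : phi cs u (phi cs u⁻¹ (t, 1)) = (t, 1) := by
      rw [← Equiv.Perm.mul_apply, ← map_mul, mul_inv_cancel, map_one, Equiv.Perm.one_apply]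
    rw [h1, phi_apply] at this
    have := congrArg Prod.snd this
    simpa [mul_one] using this
  have h4 : t = u * σ i * u⁻¹ := hts
  calc nu cs t t = (phi cs t (t, 1)).2 := rfl
    _ = (phi cs u (phi cs (σ i) (phi cs u⁻¹ (t, 1)))).2 := by
        rw [← Equiv.Perm.mul_apply, ← Equiv.Perm.mul_apply, ← map_mul, ← map_mul, ← h4]
    _ = -1 := by
        rw [h1, h2, phi_apply]
        simp only [mul_neg]
        rw [h3]

lemma nu_neg_one_of_length_lt {w t : W} (ht : cs.IsReflection t)
    (h : ℓ (w * t) < ℓ w) : nu cs w t = -1 := by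
  have htt : t * t = 1 := ht.mul_self
  have hw : w = (w * t) * t := by rw [mul_assoc, htt, mul_one]
  have hsplit : phi cs w (t, 1) = phi cs (w * t) (phi cs t (t, 1)) := by
    rw [← Equiv.Perm.mul_apply, ← map_mul, ← hw]
  have hphit : phi cs t (t, 1) = (t, -1) := by
    rw [phi_apply, nu_self_neg_one cs ht, mul_one]
    congr 1
    rw [ht.inv, htt, one_mul]
  have hne : nu cs (w * t) t ≠ -1 := by
    intro hc
    have := length_lt_of_nu_neg_one cs hc
    rw [mul_assoc, htt, mul_one] at this
    omega
  have h1 : nu cs (w * t) t = 1 := by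
    rcases Int.units_eq_one_or (nu cs (w * t) t) with h' | h'
    · exact h'
    · exact absurd h' hne
  have : phi cs (w * t) (t, -1) = ((w * t) * t * (w * t)⁻¹, nu cs (w * t) t * (-1)) :=
    phi_apply cs (w * t) t (-1)
  rw [nu, hsplit, hphit, this, h1]
  simp

/-- Strong exchange property. -/
lemma strong_exchange (ω : List B) {t : W} (ht : cs.IsReflection t)
    (h : ℓ (π ω * t) < ℓ (π ω)) :
    ∃ j < ω.length, π ω * t = π (ω.eraseIdx j) := by
  have hmem : t ∈ ris ω := mem_ris_of_nu_neg_one cs (nu_neg_one_of_length_lt cs ht h)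
  obtain ⟨j, hj, hget⟩ := List.mem_iff_getElem.mp hmem
  refine ⟨j, by simpa using hj, ?_⟩
  rw [← hget, ← List.getD_eq_getElem _ 1 hj, cs.wordProd_mul_getD_rightInvSeq]

/-- The key lifting lemma: if `s i v > v`, `s i u < u` and `v ≤_R u`, then `s i v ≤_R u`. -/
lemma lift_lemma (i : B) (v u : W) (h1 : ℓ (σ i * v) = ℓ v + 1)
    (h2 : ℓ (σ i * u) < ℓ u) (h3 : ℓ v + ℓ (v⁻¹ * u) = ℓ u) :
    ℓ (σ i * v) + ℓ ((σ i * v)⁻¹ * u) = ℓ u := by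
  obtain ⟨α, hαlen, hα⟩ := cs.exists_reduced_word (v⁻¹ * u)⁻¹
  obtain ⟨β, hβlen, hβ⟩ := cs.exists_reduced_word v⁻¹
  have hω : π (α ++ β) = u⁻¹ := by
    rw [cs.wordProd_append, ← hα, ← hβ]
    group
  have hlt : ℓ (π (α ++ β) * σ i) < ℓ (π (α ++ β)) := by
    rw [hω]
    have e1 : u⁻¹ * σ i = (σ i * u)⁻¹ := by rw [mul_inv_rev, cs.inv_simple]
    rw [e1, cs.length_inv, cs.length_inv]
    exact h2
  obtain ⟨j, hj, hexch⟩ := strong_exchange cs (α ++ β) (cs.isReflection_simple i) hlt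
  rw [hω] at hexch
  by_cases hcase : j < α.length
  · -- the erased letter is in the part for `(v⁻¹ u)⁻¹`
    rw [List.eraseIdx_append_of_lt_length hcase, cs.wordProd_append, ← hβ] at hexch
    -- `u⁻¹ σ i = π (α.eraseIdx j) * v⁻¹`
    have e2 : u⁻¹ * σ i * v = π (α.eraseIdx j) := by
      rw [hexch, mul_assoc, inv_mul_cancel, mul_one]
    have e3 : ℓ (v⁻¹ * (σ i * u)) ≤ (α.eraseIdx j).length := by
      have e2' : v⁻¹ * (σ i * u) = (u⁻¹ * σ i * v)⁻¹ := by
        rw [mul_inv_rev, mul_inv_rev, cs.inv_simple, inv_inv]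
      rw [e2', cs.length_inv, e2]
      exact cs.length_wordProd_le _
    have e4 : (α.eraseIdx j).length + 1 = α.length :=
      List.length_eraseIdx_add_one hcase
    have e5 : α.length = ℓ (v⁻¹ * u) := by rw [← hαlen.eq, ← hα, cs.length_inv]
    have e6 : ℓ u ≤ ℓ (σ i * v) + ℓ ((σ i * v)⁻¹ * u) := by
      have := cs.length_mul_le (σ i * v) ((σ i * v)⁻¹ * u)
      rwa [← mul_assoc, mul_inv_cancel, one_mul] at this
    have e7 : (σ i * v)⁻¹ * u = v⁻¹ * (σ i * u) := by
      rw [mul_inv_rev, cs.inv_simple]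
      group
    rw [e7] at e6 ⊢
    omega
  · -- the erased letter is in the part for `v⁻¹`: contradiction
    exfalso
    rw [List.eraseIdx_append_of_length_le (not_lt.mp hcase), cs.wordProd_append, ← hα]
      at hexch
    have e2 : v⁻¹ * σ i = π (β.eraseIdx (j - α.length)) := by
      have := congrArg (fun z => (v⁻¹ * u) * z) hexch
      simpa [mul_assoc, ← hα] using this
    have e3 : ℓ (v⁻¹ * σ i) ≤ (β.eraseIdx (j - α.length)).length := by
      rw [e2]; exact cs.length_wordProd_le _
    have hj' : j - α.length < β.length := by
      have : j < α.length + β.length := by simpa using hj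
      omega
    have e4 : (β.eraseIdx (j - α.length)).length + 1 = β.length :=
      List.length_eraseIdx_add_one hj'
    have e5 : ℓ (v⁻¹ * σ i) = ℓ (σ i * v) := by
      have : v⁻¹ * σ i = (σ i * v)⁻¹ := by rw [mul_inv_rev, cs.inv_simple]
      rw [this, cs.length_inv]
    have e6 : β.length = ℓ v := by rw [← hβlen.eq, ← hβ, cs.length_inv]
    omega

lemma main (dem : W → W → W) (hdem : IsDemazureProduct cs dem) :
    ∀ n, ∀ v w : W, ℓ v ≤ n → lWeak cs w (dem v w) ∧ rWeak cs v (dem v w) := by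
  intro n
  induction n with
  | zero =>
      intro v w hv
      have hv1 : v = 1 := cs.length_eq_zero_iff.mp (Nat.le_zero.mp hv)
      subst hv1
      rw [hdem.1]
      constructor
      · show ℓ (w * w⁻¹) + ℓ w = ℓ w
        simp
      · show ℓ (1 : W) + ℓ ((1 : W)⁻¹ * w) = ℓ w
        simp
  | succ n ih =>
      intro v w hv
      by_cases hv1 : v = 1
      · subst hv1
        rw [hdem.1]
        constructor
        · show ℓ (w * w⁻¹) + ℓ w = ℓ w
          simp
        · show ℓ (1 : W) + ℓ ((1 : W)⁻¹ * w) = ℓ w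
          simp
      obtain ⟨i, hdesc⟩ := cs.exists_leftDescent_of_ne_one hv1
      have hdesc' : ℓ (σ i * v) < ℓ v := hdesc
      set v' := σ i * v with hv'def
      have hvv : v = σ i * v' := by
        rw [hv'def, cs.simple_mul_simple_cancel_left]
      have hlen : ℓ (σ i * v') = ℓ v' + 1 := by
        rcases cs.length_simple_mul v' i with h | h
        · exact h
        · exfalso
          rw [← hvv] at h
          omega
      have hlenv : ℓ v = ℓ v' + 1 := by rw [hvv, hlen]
      have hv'n : ℓ v' ≤ n := by omega
      obtain ⟨IH1, IH2⟩ := ih v' w hv'n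
      set u := dem v' w with hudef
      have hsv' : dem (σ i) v' = v := by
        rw [hdem.2.1, if_pos (by omega), ← hvv]
      have hassoc : dem v w = dem (σ i) u := by
        rw [← hsv', hdem.2.2, hudef]
      rw [hassoc, hdem.2.1 i u]
      have IH1' : ℓ (u * w⁻¹) + ℓ w = ℓ u := IH1
      have IH2' : ℓ v' + ℓ (v'⁻¹ * u) = ℓ u := IH2
      by_cases hc : ℓ u < ℓ (σ i * u)
      · rw [if_pos hc]
        have hsu : ℓ (σ i * u) = ℓ u + 1 := by
          rcases cs.length_simple_mul u i with h | h
          · exact h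
          · omega
        constructor
        · show ℓ (σ i * u * w⁻¹) + ℓ w = ℓ (σ i * u)
          have a2 : ℓ (σ i * (u * w⁻¹)) ≤ ℓ (u * w⁻¹) + 1 := by
            have := cs.length_mul_le (σ i) (u * w⁻¹)
            rwa [cs.length_simple, add_comm 1] at this
          have a3 : ℓ (σ i * u) ≤ ℓ (σ i * u * w⁻¹) + ℓ w := by
            have := cs.length_mul_le (σ i * u * w⁻¹) w
            rwa [mul_assoc (σ i * u), inv_mul_cancel, mul_one] at this
          have a4 : σ i * u * w⁻¹ = σ i * (u * w⁻¹) := by rw [mul_assoc]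
          rw [a4] at a3 ⊢
          omega
        · show ℓ v + ℓ (v⁻¹ * (σ i * u)) = ℓ (σ i * u)
          have b1 : v⁻¹ * (σ i * u) = v'⁻¹ * u := by
            rw [hvv, mul_inv_rev, cs.inv_simple, mul_assoc,
              cs.simple_mul_simple_cancel_left]
          rw [b1, hsu, hlenv]
          omega
      · rw [if_neg hc]
        have hsu : ℓ (σ i * u) < ℓ u := by
          rcases cs.length_simple_mul u i with h | h
          · omega
          · omega
        refine ⟨IH1, ?_⟩
        show ℓ v + ℓ (v⁻¹ * u) = ℓ u
        rw [hvv]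
        exact lift_lemma cs i v' u hlen hsu IH2'

end DemAux

/-- For all `v, w ∈ W`: `w ≤_L v*w` and `v ≤_R v*w` for the Demazure product `*`. -/
theorem stmt5 {B W : Type*} [Group W] {M : CoxeterMatrix B} (cs : CoxeterSystem M W)
    (dem : W → W → W) (hdem : IsDemazureProduct cs dem) (v w : W) :
    lWeak cs w (dem v w) ∧ rWeak cs v (dem v w) := by
  letI : DecidableEq W := Classical.decEq W
  exact DemAux.main cs dem hdem (cs.length v) v w le_rfl
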